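/- Let n ≥ 3 be an integer, ξ ∈ (4−4/n, 4] and γ > 0. Then for every s > ξ/γ one has n² s^{(2n−2)/n} γ² − 4(n²−n) γ s^{(n−2)/n} ≥ (n²ξ − 4(n²−n)) ξ^{(n−2)/n} γ^{2/n}, and the constant (n²ξ − 4(n²−n)) ξ^{(n−2)/n} is positive. -/

import Mathlib

theorem stmt7 (n : ℕ) (hn : 3 ≤ n) (ξ γ : ℝ)
    (hξ1 : 4 - 4 / (n : ℝ) < ξ) (hξ2 : ξ ≤ 4) (hγ : 0 < γ) :
    (∀ s : ℝ, ξ / γ < s →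
      ((n : ℝ) ^ 2 * ξ - 4 * ((n : ℝ) ^ 2 - n)) * ξ ^ (((n : ℝ) - 2) / n) * γ ^ ((2 : ℝ) / n) ≤
        (n : ℝ) ^ 2 * s ^ ((2 * (n : ℝ) - 2) / n) * γ ^ 2 -
          4 * ((n : ℝ) ^ 2 - n) * γ * s ^ (((n : ℝ) - 2) / n)) ∧
    0 < ((n : ℝ) ^ 2 * ξ - 4 * ((n : ℝ) ^ 2 - n)) * ξ ^ (((n : ℝ) - 2) / n) := by
  have hn3 : (3:ℝ) ≤ (n:ℝ) := by exact_mod_cast hn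
  have hnpos : (0:ℝ) < n := by linarith
  have h4n : (n:ℝ) * (4 / n) = 4 := by field_simp
  have hξpos : 0 < ξ := by
    have : 4 / (n:ℝ) ≤ 4 / 3 := by
      apply div_le_div_of_nonneg_left (by norm_num) (by norm_num) hn3
    linarith
  have hcpos : 0 < (n:ℝ)^2 * ξ - 4*((n:ℝ)^2 - n) := by
    nlinarith [mul_lt_mul_of_pos_left hξ1 (mul_pos hnpos hnpos)]
  have hb0 : 0 ≤ ((n:ℝ) - 2) / n := div_nonneg (by linarith) (by linarith)
  refine ⟨?_, mul_pos hcpos (Real.rpow_pos_of_pos hξpos _)⟩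
  intro s hs
  have hspos : 0 < s := lt_trans (div_pos hξpos hγ) hs
  set t := s * γ with ht_def
  have ht : ξ < t := (div_lt_iff₀ hγ).mp hs
  have htpos : 0 < t := lt_trans hξpos ht
  set b := ((n:ℝ) - 2) / n with hb_def
  set e := (2:ℝ) / n with he_def
  set a := (2 * (n:ℝ) - 2) / n with ha_def
  have hab : a = b + 1 := by rw [ha_def, hb_def, div_add_one hnpos.ne']; congr 1; ring
  have hbe : b + e = 1 := by rw [hb_def, he_def, ← add_div, sub_add_cancel, div_self hnpos.ne']
  have hae : a + e = 2 := by
    rw [ha_def, he_def]; field_simp; ring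
  -- key rewrites
  have h1 : s ^ a * γ ^ 2 = t ^ a * γ ^ e := by
    rw [ht_def, Real.mul_rpow hspos.le hγ.le, mul_assoc, ← Real.rpow_add hγ, hae,
      ← Real.rpow_natCast γ 2]
    norm_num
  have h2 : γ * s ^ b = t ^ b * γ ^ e := by
    rw [ht_def, Real.mul_rpow hspos.le hγ.le, mul_assoc, ← Real.rpow_add hγ, hbe,
      Real.rpow_one, mul_comm]
  have h3 : t ^ a = t ^ b * t := by
    rw [hab, Real.rpow_add htpos, Real.rpow_one]
  have key : ((n:ℝ)^2 * ξ - 4*((n:ℝ)^2 - n)) * ξ ^ b ≤ ((n:ℝ)^2 * t - 4*((n:ℝ)^2 - n)) * t ^ b := by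
    apply mul_le_mul
    · nlinarith [mul_pos hnpos hnpos]
    · exact Real.rpow_le_rpow hξpos.le ht.le hb0
    · exact Real.rpow_nonneg hξpos.le b
    · nlinarith [mul_pos hnpos hnpos]
  have hγe : 0 ≤ γ ^ e := Real.rpow_nonneg hγ.le e
  calc ((n:ℝ)^2 * ξ - 4*((n:ℝ)^2 - n)) * ξ ^ b * γ ^ e
      ≤ ((n:ℝ)^2 * t - 4*((n:ℝ)^2 - n)) * t ^ b * γ ^ e := by
        exact mul_le_mul_of_nonneg_right key hγe
    _ = (n:ℝ)^2 * s ^ a * γ ^ 2 - 4*((n:ℝ)^2 - n) * γ * s ^ b := by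
        rw [mul_assoc ((n:ℝ)^2) (s^a) (γ^2), h1, mul_assoc (4*((n:ℝ)^2 - n)) γ (s^b), h2, h3]
        ring
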